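/- Let μ be a Borel probability measure on ℝⁿ with compact support E, let a ∈ (0,1), ε > 0 and t > 0, and suppose there exist a closed set F with E ⊆ F, a Borel measure ν with ν(ℝⁿ \ F) = 0, and a constant c ≥ 1 such that c⁻¹ r^t ≤ ν(B(x,r)) ≤ c r^t for all x ∈ F and 0 < r < diam F. Then there exists a constant c₀ > 0, depending only on a, ε, t, n and c, such that for all 0 < ρ₀ ≤ 1/2: μ({x : there exist ρ and r with 0 < ρ < ρ₀ and ρ^a ≤ r ≤ 1 such that μ(B(x,r)) > (4r/ρ)^(t(1+ε)) μ(B(x,ρ))}) ≤ c₀ ρ₀^(tε(1−a)). -/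

import Mathlib

open MeasureTheory Metric Filter Set Topology
open scoped ENNReal

noncomputable section
open scoped Classical

/-- The support of a Borel measure `μ`: the set of points all of whose
neighborhoods have positive measure. -/
def msupp {n : ℕ} (μ : Measure (EuclideanSpace ℝ (Fin n))) :
    Set (EuclideanSpace ℝ (Fin n)) :=
  {x | ∀ r : ℝ, 0 < r → 0 < μ (Metric.ball x r)}

/-- The Assouad dimension of a set `E ⊆ ℝⁿ`: the infimum of all `s ≥ 0` for which
there is `C > 0` such that for all `0 < r < R` and `x ∈ E`, the set `E ∩ B(x,R)`
can be covered by at most `C (R/r)^s` balls of radius `r`. -/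
def dimA {n : ℕ} (E : Set (EuclideanSpace ℝ (Fin n))) : ℝ :=
  sInf {s : ℝ | 0 ≤ s ∧ ∃ C : ℝ, 0 < C ∧ ∀ x ∈ E, ∀ r R : ℝ, 0 < r → r < R →
    ∃ F : Finset (EuclideanSpace ℝ (Fin n)), (F.card : ℝ) ≤ C * (R / r) ^ s ∧
      E ∩ Metric.closedBall x R ⊆ ⋃ y ∈ F, Metric.closedBall y r}

/-- The packing dimension of a measure:
`dim_P μ = sup {t ≥ 0 : liminf_{r→0} μ(B(x,r))/r^t = 0 for μ-a.e. x}`. -/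
def dimP {n : ℕ} (μ : Measure (EuclideanSpace ℝ (Fin n))) : ℝ :=
  sSup {t : ℝ | 0 ≤ t ∧ ∀ᵐ x ∂μ,
    Filter.liminf (fun r : ℝ =>
      μ (Metric.closedBall x r) / ENNReal.ofReal (r ^ t)) (𝓝[>] 0) = 0}

/-- The potential `F_m^μ(x,r) = ∫ min{1, r^m |x-y|^{-m}} dμ(y)`, with the convention
that the integrand equals `1` when `y = x`. -/
def Fpot {n : ℕ} (m : ℝ) (μ : Measure (EuclideanSpace ℝ (Fin n)))
    (x : EuclideanSpace ℝ (Fin n)) (r : ℝ) : ℝ≥0∞ :=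
  ∫⁻ y, ENNReal.ofReal (if y = x then 1 else min 1 (r ^ m * ‖x - y‖ ^ (-m))) ∂μ

/-- The `m`-dimensional packing dimension profile
`dim_P^m μ = sup {t ≥ 0 : liminf_{r→0} r^{-t} F_m^μ(x,r) = 0 for μ-a.e. x}`. -/
def dimPprofile {n : ℕ} (m : ℝ) (μ : Measure (EuclideanSpace ℝ (Fin n))) : ℝ :=
  sSup {t : ℝ | 0 ≤ t ∧ ∀ᵐ x ∂μ,
    Filter.liminf (fun r : ℝ => Fpot m μ x r / ENNReal.ofReal (r ^ t)) (𝓝[>] 0) = 0}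

/-- The potential
`F_{t,s,θ}^μ(x,r) = ∫ min{1, r^t |x-y|^{-t}, r^{θ(s-t)+t} |x-y|^{-s}} dμ(y)`,
with the convention that the integrand equals `1` when `y = x`. -/
def Ftheta {n : ℕ} (t s θ : ℝ) (μ : Measure (EuclideanSpace ℝ (Fin n)))
    (x : EuclideanSpace ℝ (Fin n)) (r : ℝ) : ℝ≥0∞ :=
  ∫⁻ y, ENNReal.ofReal (if y = x then 1 else
    min (min 1 (r ^ t * ‖x - y‖ ^ (-t))) (r ^ (θ * (s - t) + t) * ‖x - y‖ ^ (-s))) ∂μ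

/-- The `θ`-profile
`dim_{P,θ}^s μ = sup {t ∈ [0,s] : liminf_{r→0} r^{-t} F_{t,s,θ}^μ(x,r) = 0 for μ-a.e. x}`. -/
def dimPtheta {n : ℕ} (s θ : ℝ) (μ : Measure (EuclideanSpace ℝ (Fin n))) : ℝ :=
  sSup {t : ℝ | t ∈ Set.Icc 0 s ∧ ∀ᵐ x ∂μ,
    Filter.liminf (fun r : ℝ => Ftheta t s θ μ x r / ENNReal.ofReal (r ^ t)) (𝓝[>] 0) = 0}

/-- The critical point `D(μ) = inf_{θ ∈ (0,1)} dim_{P,θ}^n μ` of a measure on `ℝⁿ`. -/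
def Dcrit (n : ℕ) (μ : Measure (EuclideanSpace ℝ (Fin n))) : ℝ :=
  sInf ((fun θ : ℝ => dimPtheta (n : ℝ) θ μ) '' Set.Ioo 0 1)

section Aux

variable {n : ℕ} {μ : Measure (EuclideanSpace ℝ (Fin n))}

lemma aux_inv_mul_le_one (a : ℝ≥0∞) : a⁻¹ * a ≤ 1 := by
  rcases eq_or_ne a 0 with rfl | h0
  · simp
  rcases eq_or_ne a ∞ with rfl | htop
  · simp
  · rw [ENNReal.inv_mul_cancel h0 htop]

lemma measurable_mu_cb [SFinite μ] (r : ℝ) :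
    Measurable fun x => μ (Metric.closedBall x r) := by
  have hs : MeasurableSet {p : EuclideanSpace ℝ (Fin n) × EuclideanSpace ℝ (Fin n) |
      dist p.2 p.1 ≤ r} := by
    have : IsClosed {p : EuclideanSpace ℝ (Fin n) × EuclideanSpace ℝ (Fin n) |
        dist p.2 p.1 ≤ r} := isClosed_le (by fun_prop) continuous_const
    exact this.measurableSet
  have h := measurable_measure_prodMk_left (ν := μ) hs
  have : (fun x => μ (Metric.closedBall x r)) =
      fun x : EuclideanSpace ℝ (Fin n) => μ (Prod.mk x ⁻¹' {p : EuclideanSpace ℝ (Fin n) × EuclideanSpace ℝ (Fin n) | dist p.2 p.1 ≤ r}) := by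
    funext x; rfl
  rw [this]; exact h

lemma msupp_isClosed : IsClosed (msupp μ) := by
  rw [← isOpen_compl_iff]
  rw [Metric.isOpen_iff]
  intro x hx
  simp only [msupp, mem_compl_iff, mem_setOf_eq, not_forall] at hx
  obtain ⟨r, hr, h0⟩ := hx
  rw [not_lt, le_zero_iff] at h0
  refine ⟨r / 2, by positivity, fun y hy => ?_⟩
  simp only [msupp, mem_compl_iff, mem_setOf_eq, not_forall]
  refine ⟨r / 2, by positivity, ?_⟩
  rw [not_lt, le_zero_iff, ← le_zero_iff, ← h0]
  apply measure_mono
  intro z hz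
  have := mem_ball.1 hy
  have := mem_ball.1 hz
  rw [mem_ball]
  calc dist z x ≤ dist z y + dist y x := dist_triangle _ _ _
  _ < r / 2 + r / 2 := by linarith
  _ = r := by ring

lemma msupp_compl_null : μ (msupp μ)ᶜ = 0 := by
  have hsub : (msupp μ)ᶜ ⊆ ⋃₀ {V | IsOpen V ∧ μ V = 0} := by
    intro x hx
    simp only [msupp, mem_compl_iff, mem_setOf_eq, not_forall] at hx
    obtain ⟨r, hr, h0⟩ := hx
    rw [not_lt, le_zero_iff] at h0
    exact ⟨Metric.ball x r, ⟨isOpen_ball, h0⟩, mem_ball_self hr⟩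
  obtain ⟨T, hTc, hTsub, hTeq⟩ :=
    TopologicalSpace.isOpen_sUnion_countable {V | IsOpen V ∧ μ V = 0} (fun V hV => hV.1)
  have : μ (⋃₀ T) = 0 := by
    rw [measure_sUnion_null_iff hTc]
    exact fun s hs => (hTsub hs).2
  refine le_antisymm ?_ zero_le
  calc μ (msupp μ)ᶜ ≤ μ (⋃₀ T) := by rw [hTeq]; exact measure_mono hsub
  _ = 0 := this

lemma exists_dyadic {x : ℝ} (h0 : 0 < x) (h1 : x ≤ 1) :
    ∃ m : ℕ, (1/2:ℝ)^(m+1) < x ∧ x ≤ (1/2:ℝ)^m := by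
  have hQ : ∃ m : ℕ, (1/2:ℝ)^m < x := exists_pow_lt_of_lt_one h0 (by norm_num)
  classical
  let N := Nat.find hQ
  have hN : (1/2:ℝ)^N < x := Nat.find_spec hQ
  have hN0 : N ≠ 0 := by
    intro h
    rw [h] at hN
    simp at hN
    linarith
  obtain ⟨m, hm'⟩ := Nat.exists_eq_succ_of_ne_zero hN0
  have hm : ¬ ((1/2:ℝ)^m < x) := Nat.find_min hQ (by omega)
  refine ⟨m, ?_, le_of_not_gt hm⟩
  rw [hm'] at hN; exact hN

end Aux

section Core

variable {n : ℕ}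

lemma core_est (μ : Measure (EuclideanSpace ℝ (Fin n))) [IsProbabilityMeasure μ]
    (E : Set (EuclideanSpace ℝ (Fin n))) (hEm : MeasurableSet E) (hE1 : μ Eᶜ = 0)
    (δ R : ℝ) (hδ : 0 < δ) (T : ℝ≥0∞) (hT0 : T ≠ 0) (hTtop : T ≠ ∞) (M : ℝ≥0∞)
    (hcov : ∀ y : EuclideanSpace ℝ (Fin n), ∃ s : Finset (EuclideanSpace ℝ (Fin n)),
      (s.card : ℝ≥0∞) ≤ M ∧
      E ∩ Metric.closedBall y R ⊆ ⋃ z ∈ s, Metric.closedBall z (δ/2)) :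
    μ {x | T * μ (Metric.closedBall x δ) < μ (Metric.closedBall x R)} ≤ T⁻¹ * M := by
  have hfm : Measurable fun x : EuclideanSpace ℝ (Fin n) => μ (Metric.closedBall x δ) :=
    measurable_mu_cb δ
  have hgm : Measurable fun x : EuclideanSpace ℝ (Fin n) => μ (Metric.closedBall x R) :=
    measurable_mu_cb R
  set f : EuclideanSpace ℝ (Fin n) → ℝ≥0∞ := fun x => (μ (Metric.closedBall x δ))⁻¹ with hf
  have hfmeas : Measurable f := hfm.inv
  set A := {x | T * μ (Metric.closedBall x δ) < μ (Metric.closedBall x R)} with hA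
  have hAm : MeasurableSet A := measurableSet_lt (measurable_const.mul hfm) hgm
  -- pointwise estimate on A
  have hpt : ∀ x ∈ A, (1:ℝ≥0∞) ≤ T⁻¹ * (μ (Metric.closedBall x R) * f x) := by
    intro x hx
    have hx' : T * μ (Metric.closedBall x δ) < μ (Metric.closedBall x R) := hx
    have hb_top : μ (Metric.closedBall x δ) ≠ ∞ := measure_ne_top μ _
    rcases eq_or_ne (μ (Metric.closedBall x δ)) 0 with hb0 | hb0
    · have ha : μ (Metric.closedBall x R) ≠ 0 := by
        intro h; rw [h] at hx'; exact (not_lt.2 zero_le) hx'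
      have hfx : f x = ∞ := by rw [hf]; simp [hb0]
      rw [hfx, ENNReal.mul_top ha, ENNReal.mul_top (ENNReal.inv_ne_zero.2 hTtop)]
      exact le_top
    · have h1 : T * μ (Metric.closedBall x δ) ≤ μ (Metric.closedBall x R) := le_of_lt hx'
      calc (1:ℝ≥0∞) = T⁻¹ * (T * μ (Metric.closedBall x δ) * (μ (Metric.closedBall x δ))⁻¹) := by
            rw [mul_assoc T, ENNReal.mul_inv_cancel hb0 hb_top, mul_one,
              ENNReal.inv_mul_cancel hT0 hTtop]
      _ ≤ T⁻¹ * (μ (Metric.closedBall x R) * f x) := by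
            rw [hf]; gcongr
  have h1 : μ A ≤ μ (A ∩ E) := by
    calc μ A ≤ μ ((A ∩ E) ∪ Eᶜ) := by
          apply measure_mono
          intro x hx
          by_cases hxE : x ∈ E
          · exact Or.inl ⟨hx, hxE⟩
          · exact Or.inr hxE
    _ ≤ μ (A ∩ E) + μ Eᶜ := measure_union_le _ _
    _ = μ (A ∩ E) := by rw [hE1, add_zero]
  have h2 : μ (A ∩ E) ≤ T⁻¹ * ∫⁻ x in E, μ (Metric.closedBall x R) * f x ∂μ := by
    have heq : μ (A ∩ E) = ∫⁻ _ in A ∩ E, 1 ∂μ := by simp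
    rw [heq]
    calc ∫⁻ _ in A ∩ E, 1 ∂μ
        ≤ ∫⁻ x in A ∩ E, T⁻¹ * (μ (Metric.closedBall x R) * f x) ∂μ :=
          setLIntegral_mono' (hAm.inter hEm) (fun x hx => hpt x hx.1)
    _ ≤ ∫⁻ x in E, T⁻¹ * (μ (Metric.closedBall x R) * f x) ∂μ :=
          lintegral_mono' (Measure.restrict_mono inter_subset_right le_rfl) le_rfl
    _ = T⁻¹ * ∫⁻ x in E, μ (Metric.closedBall x R) * f x ∂μ :=
          lintegral_const_mul _ (hgm.mul hfmeas)
  have h3 : ∫⁻ x in E, μ (Metric.closedBall x R) * f x ∂μ ≤ M := by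
    set F : EuclideanSpace ℝ (Fin n) → EuclideanSpace ℝ (Fin n) → ℝ≥0∞ :=
      fun x y => if dist y x ≤ R then f x else 0 with hFdef
    have hrw : ∀ x, μ (Metric.closedBall x R) * f x = ∫⁻ y, F x y ∂μ := by
      intro x
      have h2' : ∫⁻ y, (Metric.closedBall x R).indicator (fun _ => f x) y ∂μ
          = f x * μ (Metric.closedBall x R) := lintegral_indicator_const measurableSet_closedBall _
      calc μ (Metric.closedBall x R) * f x = f x * μ (Metric.closedBall x R) := mul_comm _ _
      _ = ∫⁻ y, (Metric.closedBall x R).indicator (fun _ => f x) y ∂μ := h2'.symm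
      _ = ∫⁻ y, F x y ∂μ := by
          apply lintegral_congr
          intro y
          simp [Set.indicator_apply, Metric.mem_closedBall, hFdef]
    have hum : Measurable (Function.uncurry F) := by
      have hD : MeasurableSet {p : EuclideanSpace ℝ (Fin n) × EuclideanSpace ℝ (Fin n) |
          dist p.2 p.1 ≤ R} := (isClosed_le (by fun_prop) continuous_const).measurableSet
      exact Measurable.ite hD (hfmeas.comp measurable_fst) measurable_const
    have hswap : ∫⁻ x, ∫⁻ y, F x y ∂μ ∂(μ.restrict E) = ∫⁻ y, ∫⁻ x, F x y ∂(μ.restrict E) ∂μ :=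
      lintegral_lintegral_swap hum.aemeasurable
    have hinner : ∀ y, ∫⁻ x, F x y ∂(μ.restrict E) ≤ M := by
      intro y
      obtain ⟨s, hcard, hsub⟩ := hcov y
      have hFy : ∀ x, F x y = (Metric.closedBall y R).indicator f x := by
        intro x
        simp [Set.indicator_apply, Metric.mem_closedBall, hFdef, dist_comm]
      have heq2 : ∫⁻ x, F x y ∂(μ.restrict E)
          = ∫⁻ x in Metric.closedBall y R ∩ E, f x ∂μ := by
        calc ∫⁻ x, F x y ∂(μ.restrict E)
            = ∫⁻ x, (Metric.closedBall y R).indicator f x ∂(μ.restrict E) :=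
              lintegral_congr hFy
        _ = ∫⁻ x in Metric.closedBall y R, f x ∂(μ.restrict E) :=
              lintegral_indicator measurableSet_closedBall f
        _ = ∫⁻ x in Metric.closedBall y R ∩ E, f x ∂μ := by
              rw [Measure.restrict_restrict measurableSet_closedBall]
      rw [heq2]
      have hpiece : ∀ z : EuclideanSpace ℝ (Fin n),
          ∫⁻ x in Metric.closedBall z (δ/2), f x ∂μ ≤ 1 := by
        intro z
        calc ∫⁻ x in Metric.closedBall z (δ/2), f x ∂μ
            ≤ ∫⁻ _ in Metric.closedBall z (δ/2), (μ (Metric.closedBall z (δ/2)))⁻¹ ∂μ := by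
              apply setLIntegral_mono' measurableSet_closedBall
              intro x hx
              rw [hf]
              apply ENNReal.inv_le_inv.2
              apply measure_mono
              intro w hw
              have h1' := Metric.mem_closedBall.1 hw
              have h2' := Metric.mem_closedBall.1 hx
              rw [Metric.mem_closedBall]
              calc dist w x ≤ dist w z + dist z x := dist_triangle _ _ _
              _ ≤ δ/2 + δ/2 := by rw [dist_comm z x]; exact add_le_add h1' h2'
              _ = δ := by ring
        _ = (μ (Metric.closedBall z (δ/2)))⁻¹ * μ (Metric.closedBall z (δ/2)) :=
              setLIntegral_const _ _
        _ ≤ 1 := aux_inv_mul_le_one _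
      have hmono : ∫⁻ x in Metric.closedBall y R ∩ E, f x ∂μ
          ≤ ∫⁻ x in ⋃ z ∈ s, Metric.closedBall z (δ/2), f x ∂μ := by
        apply lintegral_mono'
        · apply Measure.restrict_mono _ le_rfl
          intro x hx
          exact hsub ⟨hx.2, hx.1⟩
        · exact le_rfl
      have hbu : ∀ s₁ : Finset (EuclideanSpace ℝ (Fin n)),
          ∫⁻ x in ⋃ z ∈ s₁, Metric.closedBall z (δ/2), f x ∂μ
          ≤ ∑ z ∈ s₁, ∫⁻ x in Metric.closedBall z (δ/2), f x ∂μ := by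
        classical
        intro s₁
        induction s₁ using Finset.induction_on with
        | empty => simp
        | insert z₀ s' hzs ih =>
          rw [Finset.set_biUnion_insert, Finset.sum_insert hzs]
          exact le_trans (lintegral_union_le _ _ _) (by gcongr)
      calc ∫⁻ x in Metric.closedBall y R ∩ E, f x ∂μ
          ≤ ∑ z ∈ s, ∫⁻ x in Metric.closedBall z (δ/2), f x ∂μ := le_trans hmono (hbu s)
      _ ≤ ∑ _z ∈ s, 1 := Finset.sum_le_sum (fun z _ => hpiece z)
      _ = (s.card : ℝ≥0∞) := by simp
      _ ≤ M := hcard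
    calc ∫⁻ x in E, μ (Metric.closedBall x R) * f x ∂μ
        = ∫⁻ x, ∫⁻ y, F x y ∂μ ∂(μ.restrict E) := by
          apply lintegral_congr
          intro x
          exact hrw x
    _ = ∫⁻ y, ∫⁻ x, F x y ∂(μ.restrict E) ∂μ := hswap
    _ ≤ ∫⁻ _, M ∂μ := lintegral_mono hinner
    _ = M := by simp
  calc μ A ≤ μ (A ∩ E) := h1
  _ ≤ T⁻¹ * ∫⁻ x in E, μ (Metric.closedBall x R) * f x ∂μ := h2
  _ ≤ T⁻¹ * M := by gcongr

end Core

section Cover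

variable {n : ℕ}

lemma exists_Cup (t c : ℝ) (ht : 0 < t) (hc : 1 ≤ c)
    (F : Set (EuclideanSpace ℝ (Fin n))) (ν : Measure (EuclideanSpace ℝ (Fin n)))
    (hF : IsClosed F) (hν : ν Fᶜ = 0)
    (hreg : ∀ x ∈ F, ∀ r : ℝ, 0 < r → ENNReal.ofReal r < EMetric.diam F →
      ENNReal.ofReal (c⁻¹ * r ^ t) ≤ ν (Metric.closedBall x r) ∧
      ν (Metric.closedBall x r) ≤ ENNReal.ofReal (c * r ^ t)) :
    ∃ Cup : ℝ, c ≤ Cup ∧ (0 < EMetric.diam F →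
      ∀ x ∈ F, ∀ r : ℝ, 0 < r → ν (Metric.closedBall x r) ≤ ENNReal.ofReal (Cup * r ^ t)) := by
  by_cases htop : EMetric.diam F = ⊤
  · refine ⟨c, le_rfl, fun _ x hx r hr => ?_⟩
    exact (hreg x hx r hr (by rw [htop]; exact ENNReal.ofReal_lt_top)).2
  · by_cases h0 : EMetric.diam F = 0
    · exact ⟨c, le_rfl, fun hpos => absurd h0 hpos.ne'⟩
    · set d := (EMetric.diam F).toReal with hddef
      have hd : 0 < d := ENNReal.toReal_pos h0 htop
      have hdiam_eq : EMetric.diam F = ENNReal.ofReal d := (ENNReal.ofReal_toReal htop).symm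
      have hFb : Bornology.IsBounded F := Metric.isBounded_iff_ediam_ne_top.2 htop
      have hFc : IsCompact F := Metric.isCompact_of_isClosed_isBounded hF hFb
      obtain ⟨tset, htsub, htfin, htcov⟩ := hFc.finite_cover_balls (e := d/4) (by positivity)
      have hνF : ν Set.univ ≠ ⊤ := by
        have h1 : ν Set.univ ≤ ν F + ν Fᶜ := by
          rw [← Set.union_compl_self F]
          exact measure_union_le _ _
        rw [hν, add_zero] at h1
        have h2 : ν F ≤ ∑ x ∈ htfin.toFinset, ν (Metric.ball x (d/4)) := by
          calc ν F ≤ ν (⋃ x ∈ htfin.toFinset, Metric.ball x (d/4)) := by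
                apply measure_mono
                intro w hw
                have := htcov hw
                simp only [Set.mem_iUnion] at this ⊢
                obtain ⟨x, hx, hwx⟩ := this
                exact ⟨x, htfin.mem_toFinset.2 hx, hwx⟩
          _ ≤ ∑ x ∈ htfin.toFinset, ν (Metric.ball x (d/4)) := measure_biUnion_finset_le _ _
        have h3 : ∀ x ∈ htfin.toFinset, ν (Metric.ball x (d/4)) ≤ ENNReal.ofReal (c * (d/4)^t) := by
          intro x hx
          have hxF : x ∈ F := htsub (htfin.mem_toFinset.1 hx)
          have hlt : ENNReal.ofReal (d/4) < EMetric.diam F := by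
            rw [hdiam_eq]
            exact ENNReal.ofReal_lt_ofReal_iff_of_nonneg (by positivity) |>.2 (by linarith)
          calc ν (Metric.ball x (d/4)) ≤ ν (Metric.closedBall x (d/4)) :=
                measure_mono Metric.ball_subset_closedBall
          _ ≤ ENNReal.ofReal (c * (d/4)^t) := (hreg x hxF (d/4) (by positivity) hlt).2
        have h4 : ν F ≠ ⊤ := by
          apply ne_top_of_le_ne_top _ (le_trans h2 (Finset.sum_le_sum h3))
          exact ne_of_lt (lt_of_le_of_lt (le_refl _)
            (by exact_mod_cast ENNReal.sum_lt_top.2 (fun x _ => ENNReal.ofReal_lt_top)))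
        exact ne_top_of_le_ne_top h4 h1
      set V := (ν Set.univ).toReal with hVdef
      have hV : 0 ≤ V := ENNReal.toReal_nonneg
      have hdt : (0:ℝ) < d ^ t := Real.rpow_pos_of_pos hd t
      have hVd : (0:ℝ) ≤ V / d^t := by positivity
      refine ⟨c + V / d^t, by linarith, fun _ x hx r hr => ?_⟩
      have hrt : (0:ℝ) ≤ r ^ t := (Real.rpow_pos_of_pos hr t).le
      by_cases hrd : ENNReal.ofReal r < EMetric.diam F
      · refine le_trans (hreg x hx r hr hrd).2 (ENNReal.ofReal_le_ofReal ?_)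
        have : (0:ℝ) ≤ V / d^t := by positivity
        nlinarith
      · push_neg at hrd
        have hdr : d ≤ r := by
          rw [hdiam_eq] at hrd
          exact (ENNReal.ofReal_le_ofReal_iff hr.le).1 hrd
        calc ν (Metric.closedBall x r) ≤ ν Set.univ := measure_mono (Set.subset_univ _)
        _ = ENNReal.ofReal V := (ENNReal.ofReal_toReal hνF).symm
        _ ≤ ENNReal.ofReal ((c + V / d^t) * r^t) := by
            apply ENNReal.ofReal_le_ofReal
            have hmono : d^t ≤ r^t := Real.rpow_le_rpow hd.le hdr ht.le
            have hVeq : V = (V / d^t) * d^t := by field_simp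
            have h5 : (V / d^t) * d^t ≤ (V / d^t) * r^t :=
              mul_le_mul_of_nonneg_left hmono (by positivity)
            nlinarith

lemma cover_tail (t c Cup : ℝ) (ht : 0 < t) (hc : 1 ≤ c) (hCup : 0 < Cup)
    (F : Set (EuclideanSpace ℝ (Fin n))) (ν : Measure (EuclideanSpace ℝ (Fin n)))
    (hlow : ∀ x ∈ F, ∀ r : ℝ, 0 < r → ENNReal.ofReal r < EMetric.diam F →
      ENNReal.ofReal (c⁻¹ * r ^ t) ≤ ν (Metric.closedBall x r))
    (hup : ∀ x ∈ F, ∀ r : ℝ, 0 < r → ν (Metric.closedBall x r) ≤ ENNReal.ofReal (Cup * r ^ t))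
    (δ R : ℝ) (hδ : 0 < δ) (hδR : δ ≤ R)
    (hdiam : ENNReal.ofReal (δ/5) < EMetric.diam F) (y : EuclideanSpace ℝ (Fin n)) :
    ∃ s : Finset (EuclideanSpace ℝ (Fin n)),
      (s.card : ℝ) ≤ (c * Cup * 15 ^ t) * (R/δ) ^ t ∧
      F ∩ Metric.closedBall y R ⊆ ⋃ z ∈ s, Metric.closedBall z (δ/2) := by
  classical
  have hRpos : 0 < R := lt_of_lt_of_le hδ hδR
  have hcpos : (0:ℝ) < c := lt_of_lt_of_le one_pos hc
  set B : ℝ := (c * Cup * 15 ^ t) * (R/δ) ^ t with hB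
  have hBpos : 0 < B := by
    have h1 : (0:ℝ) < (15:ℝ) ^ t := Real.rpow_pos_of_pos (by norm_num) t
    have h2 : (0:ℝ) < (R/δ) ^ t := Real.rpow_pos_of_pos (by positivity) t
    positivity
  by_cases hne : (F ∩ Metric.closedBall y R).Nonempty
  swap
  · refine ⟨∅, by simpa using hBpos.le, fun x hx => absurd ⟨x, hx⟩ hne⟩
  obtain ⟨x', hx'F, hx'B⟩ := hne
  set P : Finset (EuclideanSpace ℝ (Fin n)) → Prop := fun s =>
    (↑s ⊆ F ∩ Metric.closedBall x' (2*R)) ∧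
    ((s : Set (EuclideanSpace ℝ (Fin n))).Pairwise fun p q => δ/2 < dist p q) with hPdef
  have hcardP : ∀ s, P s → (s.card : ℝ) ≤ B := by
    intro s hs
    have hdis : (↑s : Set (EuclideanSpace ℝ (Fin n))).PairwiseDisjoint
        (fun p => Metric.closedBall p (δ/5)) := by
      intro p hp q hq hpq
      apply Metric.closedBall_disjoint_closedBall
      have := hs.2 hp hq hpq
      linarith
    have hunion := measure_biUnion_finset (μ := ν) hdis
      (fun p _ => measurableSet_closedBall)
    have hlow' : ∀ p ∈ s, ENNReal.ofReal (c⁻¹ * (δ/5) ^ t) ≤ ν (Metric.closedBall p (δ/5)) :=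
      fun p hp => hlow p ((hs.1 hp).1) (δ/5) (by positivity) hdiam
    have hsum : (s.card : ℝ≥0∞) * ENNReal.ofReal (c⁻¹ * (δ/5)^t)
        ≤ ν (⋃ p ∈ s, Metric.closedBall p (δ/5)) := by
      rw [hunion]
      calc (s.card : ℝ≥0∞) * ENNReal.ofReal (c⁻¹ * (δ/5)^t)
          = ∑ _p ∈ s, ENNReal.ofReal (c⁻¹ * (δ/5)^t) := by
            rw [Finset.sum_const, nsmul_eq_mul]
      _ ≤ ∑ p ∈ s, ν (Metric.closedBall p (δ/5)) := Finset.sum_le_sum hlow'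
    have hsub2 : (⋃ p ∈ s, Metric.closedBall p (δ/5)) ⊆ Metric.closedBall x' (3*R) := by
      intro w hw
      simp only [Set.mem_iUnion] at hw
      obtain ⟨p, hp, hwp⟩ := hw
      have hpx := Metric.mem_closedBall.1 (hs.1 hp).2
      have hwp' := Metric.mem_closedBall.1 hwp
      rw [Metric.mem_closedBall]
      calc dist w x' ≤ dist w p + dist p x' := dist_triangle _ _ _
      _ ≤ δ/5 + 2*R := add_le_add hwp' hpx
      _ ≤ 3*R := by linarith
    have hupp : ν (Metric.closedBall x' (3*R)) ≤ ENNReal.ofReal (Cup * (3*R)^t) :=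
      hup x' hx'F _ (by positivity)
    have hchain : (s.card : ℝ≥0∞) * ENNReal.ofReal (c⁻¹ * (δ/5)^t)
        ≤ ENNReal.ofReal (Cup * (3*R)^t) :=
      le_trans hsum (le_trans (measure_mono hsub2) hupp)
    have h5 : (0:ℝ) < (δ/5)^t := Real.rpow_pos_of_pos (by positivity) t
    have hcr : ((s.card:ℝ)) * (c⁻¹ * (δ/5)^t) ≤ Cup * (3*R)^t := by
      rw [← ENNReal.ofReal_natCast, ← ENNReal.ofReal_mul (by positivity)] at hchain
      have hrhs : (0:ℝ) ≤ Cup * (3*R)^t := by positivity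
      exact (ENNReal.ofReal_le_ofReal_iff hrhs).1 hchain
    have h3R : (3*R)^t = 15^t * ((R/δ)^t * (δ/5)^t) := by
      rw [← Real.mul_rpow (by positivity) (by positivity),
        ← Real.mul_rpow (by positivity) (by positivity)]
      congr 1
      field_simp
      ring
    have hcr2 : ((s.card:ℝ) * c⁻¹) * ((δ/5)^t) ≤ (Cup * 15^t * (R/δ)^t) * ((δ/5)^t) := by
      rw [h3R] at hcr
      calc ((s.card:ℝ) * c⁻¹) * ((δ/5)^t) = (s.card:ℝ) * (c⁻¹ * (δ/5)^t) := by ring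
      _ ≤ Cup * (15^t * ((R/δ)^t * (δ/5)^t)) := hcr
      _ = (Cup * 15^t * (R/δ)^t) * ((δ/5)^t) := by ring
    have step1 := le_of_mul_le_mul_right hcr2 h5
    calc (s.card:ℝ) = ((s.card:ℝ) * c⁻¹) * c := by field_simp
    _ ≤ (Cup * 15^t * (R/δ)^t) * c := mul_le_mul_of_nonneg_right step1 hcpos.le
    _ = B := by rw [hB]; ring
  set S : Set ℕ := {m | ∃ s : Finset (EuclideanSpace ℝ (Fin n)), P s ∧ s.card = m} with hSdef
  have hS0 : 0 ∈ S := ⟨∅, ⟨by simp, by simp⟩, rfl⟩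
  have hSb : BddAbove S := by
    refine ⟨Nat.floor B, fun m hm => ?_⟩
    obtain ⟨s, hPs, rfl⟩ := hm
    exact Nat.le_floor (hcardP s hPs)
  obtain ⟨s₀, hPs₀, hcard₀⟩ := Nat.sSup_mem ⟨0, hS0⟩ hSb
  refine ⟨s₀, hcardP s₀ hPs₀, ?_⟩
  intro z hz
  have hz2R : z ∈ F ∩ Metric.closedBall x' (2*R) := by
    refine ⟨hz.1, ?_⟩
    have h1 := Metric.mem_closedBall.1 hz.2
    have h2 := Metric.mem_closedBall.1 hx'B
    rw [Metric.mem_closedBall]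
    calc dist z x' ≤ dist z y + dist y x' := dist_triangle _ _ _
    _ ≤ R + R := add_le_add h1 (by rw [dist_comm]; exact h2)
    _ = 2*R := by ring
  by_contra hno
  have hfar : ∀ p ∈ s₀, δ/2 < dist z p := by
    intro p hp
    by_contra hle
    push_neg at hle
    apply hno
    simp only [Set.mem_iUnion]
    exact ⟨p, hp, Metric.mem_closedBall.2 hle⟩
  have hzs : z ∉ s₀ := by
    intro h
    have := hfar z h
    rw [dist_self] at this
    linarith
  have hP' : P (insert z s₀) := by
    constructor
    · rw [Finset.coe_insert]
      exact Set.insert_subset hz2R hPs₀.1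
    · rw [Finset.coe_insert]
      rw [Set.pairwise_insert]
      exact ⟨hPs₀.2, fun p hp _ => ⟨hfar p hp, by rw [dist_comm]; exact hfar p hp⟩⟩
  have hmem : s₀.card + 1 ∈ S := ⟨insert z s₀, hP', by rw [Finset.card_insert_of_notMem hzs]⟩
  have hle := le_csSup hSb hmem
  omega

end Cover

section Scales

def Tco (t ε : ℝ) (k j : ℕ) : ℝ≥0∞ :=
  ENNReal.ofReal ((2:ℝ) ^ (((k:ℝ)+1-(j:ℝ)) * (t*(1+ε))))

def Aset {n : ℕ} (μ : Measure (EuclideanSpace ℝ (Fin n))) (t ε : ℝ) (k j : ℕ) :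
    Set (EuclideanSpace ℝ (Fin n)) :=
  {x | Tco t ε k j * μ (Metric.closedBall x ((1/2:ℝ)^(k+1)))
    < μ (Metric.closedBall x ((1/2:ℝ)^j))}

lemma half_pow_div (k j : ℕ) :
    (1/2:ℝ)^j / (1/2:ℝ)^(k+1) = (2:ℝ)^((k:ℝ)+1-(j:ℝ)) := by
  have h1 : ((1/2:ℝ))^j = (2:ℝ)^(-(j:ℝ)) := by
    rw [Real.rpow_neg (by norm_num : (0:ℝ) ≤ 2), Real.rpow_natCast, one_div, inv_pow]
  have h2 : ((1/2:ℝ))^(k+1) = (2:ℝ)^(-((k:ℝ)+1)) := by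
    rw [Real.rpow_neg (by norm_num : (0:ℝ) ≤ 2),
      show ((k:ℝ)+1) = ((k+1:ℕ):ℝ) by push_cast; ring, Real.rpow_natCast, one_div, inv_pow]
  rw [h1, h2, ← Real.rpow_sub (by norm_num : (0:ℝ) < 2)]
  congr 1
  ring

lemma bound_Akj {n : ℕ} (μ : Measure (EuclideanSpace ℝ (Fin n))) [IsProbabilityMeasure μ]
    (a ε t : ℝ) (hε : 0 < ε) (ht : 0 < t)
    (F : Set (EuclideanSpace ℝ (Fin n))) (ν : Measure (EuclideanSpace ℝ (Fin n)))
    (c Cup : ℝ) (hEF : msupp μ ⊆ F) (hc : 1 ≤ c) (hcCup : c ≤ Cup)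
    (hreg : ∀ x ∈ F, ∀ r : ℝ, 0 < r → ENNReal.ofReal r < EMetric.diam F →
      ENNReal.ofReal (c⁻¹ * r ^ t) ≤ ν (Metric.closedBall x r) ∧
      ν (Metric.closedBall x r) ≤ ENNReal.ofReal (c * r ^ t))
    (hupball : 0 < EMetric.diam F →
      ∀ x ∈ F, ∀ r : ℝ, 0 < r → ν (Metric.closedBall x r) ≤ ENNReal.ofReal (Cup * r ^ t))
    (k j : ℕ) (hjk : j ≤ k) :
    μ (Aset μ t ε k j) ≤ ENNReal.ofReal (c * Cup * 15^t) *
      (2:ℝ≥0∞) ^ (-(((k:ℝ)+1-(j:ℝ)) * (t*ε))) := by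
  classical
  have hEm : MeasurableSet (msupp μ) := msupp_isClosed.measurableSet
  have hEc : μ (msupp μ)ᶜ = 0 := msupp_compl_null (μ := μ)
  have hE1 : μ (msupp μ) = 1 := by
    have h := measure_add_measure_compl (μ := μ) hEm
    rw [hEc, add_zero, measure_univ] at h
    exact h
  have hcpos : (0:ℝ) < c := lt_of_lt_of_le one_pos hc
  have hCup : 0 < Cup := lt_of_lt_of_le hcpos hcCup
  have h15 : (0:ℝ) < (15:ℝ) ^ t := Real.rpow_pos_of_pos (by norm_num) t
  set Cν : ℝ := c * Cup * 15 ^ t with hCνdef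
  have hCνpos : 0 < Cν := by positivity
  set δ : ℝ := (1/2:ℝ)^(k+1) with hδdef
  set R : ℝ := (1/2:ℝ)^j with hRdef
  have hδpos : 0 < δ := by positivity
  have hRpos : 0 < R := by positivity
  have hδR : δ ≤ R := pow_le_pow_of_le_one (by norm_num) (by norm_num) (by omega)
  have he0 : (0:ℝ) ≤ (k:ℝ)+1-(j:ℝ) := by
    have : (j:ℝ) ≤ (k:ℝ) := by exact_mod_cast hjk
    linarith
  have hT0 : Tco t ε k j ≠ 0 :=
    (ENNReal.ofReal_pos.2 (Real.rpow_pos_of_pos two_pos _)).ne'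
  have hTtop : Tco t ε k j ≠ ⊤ := ENNReal.ofReal_ne_top
  have h20 : (2:ℝ≥0∞) ≠ 0 := by norm_num
  have h2top : (2:ℝ≥0∞) ≠ ⊤ := by norm_num
  by_cases hdiam : ENNReal.ofReal (δ/5) < EMetric.diam F
  · have hdiampos : (0:ℝ≥0∞) < EMetric.diam F :=
      lt_of_le_of_lt zero_le hdiam
    have hcov : ∀ y : EuclideanSpace ℝ (Fin n), ∃ s : Finset (EuclideanSpace ℝ (Fin n)),
        (s.card : ℝ≥0∞) ≤ ENNReal.ofReal (Cν * (R/δ)^t) ∧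
        msupp μ ∩ Metric.closedBall y R ⊆ ⋃ z ∈ s, Metric.closedBall z (δ/2) := by
      intro y
      obtain ⟨s, hcard, hsub⟩ := cover_tail t c Cup ht hc hCup F ν
        (fun x hx r hr hrd => (hreg x hx r hr hrd).1) (hupball hdiampos) δ R hδpos hδR hdiam y
      refine ⟨s, ?_, fun z hz => hsub ⟨hEF hz.1, hz.2⟩⟩
      calc (s.card : ℝ≥0∞) = ENNReal.ofReal (s.card : ℝ) := (ENNReal.ofReal_natCast _).symm
      _ ≤ ENNReal.ofReal (Cν * (R/δ)^t) := ENNReal.ofReal_le_ofReal (by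
            rw [hCνdef]; exact hcard)
    have hcore := core_est μ (msupp μ) hEm hEc δ R hδpos (Tco t ε k j) hT0 hTtop _ hcov
    refine le_trans hcore ?_
    have hRδ : R / δ = (2:ℝ) ^ ((k:ℝ)+1-(j:ℝ)) := half_pow_div k j
    rw [hRδ]
    have h1 : ENNReal.ofReal (Cν * ((2:ℝ)^((k:ℝ)+1-(j:ℝ)))^t)
        = ENNReal.ofReal Cν * (2:ℝ≥0∞) ^ ((((k:ℝ)+1-(j:ℝ))) * t) := by
      rw [ENNReal.ofReal_mul hCνpos.le, ← Real.rpow_mul (by norm_num : (0:ℝ) ≤ 2),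
        ← ENNReal.ofReal_rpow_of_pos (by norm_num : (0:ℝ) < 2)]
      norm_num
    have h2 : Tco t ε k j = (2:ℝ≥0∞) ^ ((((k:ℝ)+1-(j:ℝ))) * (t*(1+ε))) := by
      rw [show Tco t ε k j
          = ENNReal.ofReal ((2:ℝ) ^ (((k:ℝ)+1-(j:ℝ)) * (t*(1+ε)))) from rfl,
        ← ENNReal.ofReal_rpow_of_pos (by norm_num : (0:ℝ) < 2)]
      norm_num
    rw [h1, h2, ← ENNReal.rpow_neg]
    calc (2:ℝ≥0∞)^(-((((k:ℝ)+1-(j:ℝ))) * (t*(1+ε))))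
          * (ENNReal.ofReal Cν * (2:ℝ≥0∞)^((((k:ℝ)+1-(j:ℝ))) * t))
        = ENNReal.ofReal Cν * ((2:ℝ≥0∞)^(-((((k:ℝ)+1-(j:ℝ))) * (t*(1+ε))))
          * (2:ℝ≥0∞)^((((k:ℝ)+1-(j:ℝ))) * t)) := by ring
    _ = ENNReal.ofReal Cν * (2:ℝ≥0∞) ^ (-(((k:ℝ)+1-(j:ℝ)) * (t*ε))) := by
        rw [← ENNReal.rpow_add _ _ h20 h2top]
        congr 1
        ring
    _ ≤ ENNReal.ofReal Cν * (2:ℝ≥0∞) ^ (-(((k:ℝ)+1-(j:ℝ)) * (t*ε))) := le_rfl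
  · push_neg at hdiam
    have hempty : Aset μ t ε k j ⊆ (msupp μ)ᶜ := by
      intro x hxA
      by_contra hxE
      rw [Set.notMem_compl_iff] at hxE
      have hball : msupp μ ⊆ Metric.closedBall x δ := by
        intro w hw
        have h1 : edist w x ≤ EMetric.diam F :=
          EMetric.edist_le_diam_of_mem (hEF hw) (hEF hxE)
        have h2 : edist w x ≤ ENNReal.ofReal (δ/5) := le_trans h1 hdiam
        have h3 : dist w x ≤ δ/5 := by
          rw [edist_dist] at h2
          exact (ENNReal.ofReal_le_ofReal_iff (by positivity)).1 h2
        rw [Metric.mem_closedBall]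
        linarith
      have h1 : (1:ℝ≥0∞) ≤ μ (Metric.closedBall x δ) := by
        rw [← hE1]; exact measure_mono hball
      have hT1 : (1:ℝ≥0∞) ≤ Tco t ε k j := by
        rw [Tco, ← ENNReal.ofReal_one]
        apply ENNReal.ofReal_le_ofReal
        have hexp : (0:ℝ) ≤ ((k:ℝ)+1-(j:ℝ)) * (t*(1+ε)) :=
          mul_nonneg he0 (by nlinarith)
        have h2' : (2:ℝ)^(0:ℝ) ≤ (2:ℝ)^(((k:ℝ)+1-(j:ℝ)) * (t*(1+ε))) :=
          Real.rpow_le_rpow_of_exponent_le (by norm_num) hexp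
        rwa [Real.rpow_zero] at h2'
      have hxA' : Tco t ε k j * μ (Metric.closedBall x δ) < μ (Metric.closedBall x R) := hxA
      have hub : μ (Metric.closedBall x R) ≤ 1 := prob_le_one
      have hlb : (1:ℝ≥0∞) ≤ Tco t ε k j * μ (Metric.closedBall x δ) := by
        calc (1:ℝ≥0∞) = 1 * 1 := (one_mul 1).symm
        _ ≤ Tco t ε k j * μ (Metric.closedBall x δ) := mul_le_mul' hT1 h1
      exact absurd hxA' (not_lt.2 (le_trans hub hlb))
    calc μ (Aset μ t ε k j) ≤ μ (msupp μ)ᶜ := measure_mono hempty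
    _ = 0 := hEc
    _ ≤ _ := zero_le

end Scales


/-- If `μ` is a Borel probability measure with compact support `E` contained
in a `t`-regular set `F` (with regularity measure `ν` and constant `c`), then there is a
constant `c₀ > 0` such that for all `0 < ρ₀ ≤ 1/2`, the `μ`-measure of the set of points `x`
admitting radii `0 < ρ < ρ₀` and `ρ^a ≤ r ≤ 1` with
`μ(B(x,r)) > (4r/ρ)^(t(1+ε)) μ(B(x,ρ))` is at most `c₀ ρ₀^(tε(1-a))`. -/
theorem statement1 (n : ℕ) (μ : Measure (EuclideanSpace ℝ (Fin n))) [IsProbabilityMeasure μ]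
    (hE : IsCompact (msupp μ)) (a ε t : ℝ) (ha : a ∈ Set.Ioo (0 : ℝ) 1) (hε : 0 < ε)
    (ht : 0 < t) (F : Set (EuclideanSpace ℝ (Fin n))) (ν : Measure (EuclideanSpace ℝ (Fin n)))
    (c : ℝ) (hF : IsClosed F) (hEF : msupp μ ⊆ F) (hν : ν Fᶜ = 0) (hc : 1 ≤ c)
    (hreg : ∀ x ∈ F, ∀ r : ℝ, 0 < r → ENNReal.ofReal r < EMetric.diam F →
      ENNReal.ofReal (c⁻¹ * r ^ t) ≤ ν (Metric.closedBall x r) ∧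
      ν (Metric.closedBall x r) ≤ ENNReal.ofReal (c * r ^ t)) :
    ∃ c₀ > (0 : ℝ), ∀ ρ₀ : ℝ, 0 < ρ₀ → ρ₀ ≤ 1 / 2 →
      μ {x | ∃ ρ r : ℝ, 0 < ρ ∧ ρ < ρ₀ ∧ ρ ^ a ≤ r ∧ r ≤ 1 ∧
          ENNReal.ofReal ((4 * r / ρ) ^ (t * (1 + ε))) * μ (Metric.closedBall x ρ)
            < μ (Metric.closedBall x r)}
        ≤ ENNReal.ofReal (c₀ * ρ₀ ^ (t * ε * (1 - a))) := by
  classical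
  have ha0 : 0 < a := ha.1
  have ha1 : a < 1 := ha.2
  have hEm : MeasurableSet (msupp μ) := msupp_isClosed.measurableSet
  have hEc : μ (msupp μ)ᶜ = 0 := msupp_compl_null (μ := μ)
  obtain ⟨Cup, hcCup, hupball⟩ := exists_Cup t c ht hc F ν hF hν hreg
  have hcpos : (0:ℝ) < c := lt_of_lt_of_le one_pos hc
  have hCup : 0 < Cup := lt_of_lt_of_le hcpos hcCup
  have h15 : (0:ℝ) < (15:ℝ) ^ t := Real.rpow_pos_of_pos (by norm_num) t
  have hCνpos : (0:ℝ) < c * Cup * 15 ^ t := by positivity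
  have h20 : (2:ℝ≥0∞) ≠ 0 := by norm_num
  have h2top : (2:ℝ≥0∞) ≠ ⊤ := by norm_num
  have htε : (0:ℝ) < t * ε := by positivity
  have hθ : (0:ℝ) < t * ε * (1 - a) := by nlinarith
  set q1 : ℝ≥0∞ := (2:ℝ≥0∞) ^ (-(t*ε)) with hq1def
  set q2 : ℝ≥0∞ := (2:ℝ≥0∞) ^ (-(t*ε*(1-a))) with hq2def
  have hq1lt : q1 < 1 := ENNReal.rpow_lt_one_of_one_lt_of_neg (by norm_num) (by linarith)
  have hq2lt : q2 < 1 := ENNReal.rpow_lt_one_of_one_lt_of_neg (by norm_num) (by linarith)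
  have hq1sub : (1:ℝ≥0∞) - q1 ≠ 0 := by
    intro h
    rw [tsub_eq_zero_iff_le] at h
    exact absurd h (not_le.2 hq1lt)
  have hq2sub : (1:ℝ≥0∞) - q2 ≠ 0 := by
    intro h
    rw [tsub_eq_zero_iff_le] at h
    exact absurd h (not_le.2 hq2lt)
  have hq1inv : ((1:ℝ≥0∞) - q1)⁻¹ ≠ ⊤ := ENNReal.inv_ne_top.2 hq1sub
  have hq2inv : ((1:ℝ≥0∞) - q2)⁻¹ ≠ ⊤ := ENNReal.inv_ne_top.2 hq2sub
  set P : ℝ≥0∞ := ENNReal.ofReal (c * Cup * 15^t) * (1 - q1)⁻¹ * (1 - q2)⁻¹ with hPdef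
  have hPtop : P ≠ ⊤ :=
    ENNReal.mul_ne_top (ENNReal.mul_ne_top ENNReal.ofReal_ne_top hq1inv) hq2inv
  have hc₀pos : (0:ℝ) < P.toReal + 1 := by positivity
  refine ⟨P.toReal + 1, hc₀pos, ?_⟩
  intro ρ₀ hρ₀ hρhalf
  have hK' : ∃ k : ℕ, (1/2:ℝ)^(k+1) < ρ₀ := by
    obtain ⟨m, hm⟩ := exists_pow_lt_of_lt_one hρ₀ (by norm_num : (1/2:ℝ) < 1)
    exact ⟨m, lt_of_le_of_lt
      (pow_le_pow_of_le_one (by norm_num) (by norm_num) (Nat.le_succ m)) hm⟩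
  set K := Nat.find hK' with hKdef
  have hKspec : (1/2:ℝ)^(K+1) < ρ₀ := Nat.find_spec hK'
  set cond : ℕ → ℕ → Prop := fun k j => (j:ℝ) ≤ ((k:ℝ)+1)*a ∧ j ≤ k ∧ (1/2:ℝ)^(k+1) < ρ₀
    with hconddef
  set S : ℕ → ℕ → Set (EuclideanSpace ℝ (Fin n)) := fun k j =>
    if cond k j then Aset μ t ε k j else ∅ with hSdef
  -- inclusion
  have hincl : {x | ∃ ρ r : ℝ, 0 < ρ ∧ ρ < ρ₀ ∧ ρ ^ a ≤ r ∧ r ≤ 1 ∧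
      ENNReal.ofReal ((4 * r / ρ) ^ (t * (1 + ε))) * μ (Metric.closedBall x ρ)
        < μ (Metric.closedBall x r)} ⊆
      (msupp μ)ᶜ ∪ ⋃ (m : ℕ), ⋃ (j : ℕ), S (K + m) j := by
    intro x hx
    by_cases hxE : x ∈ msupp μ
    swap
    · exact Or.inl hxE
    obtain ⟨ρ, r, hρpos, hρlt, hρar, hr1, hμlt⟩ := hx
    have hρ1 : ρ < 1 := lt_of_lt_of_le hρlt (le_trans hρhalf (by norm_num))
    have hrpos : 0 < r := lt_of_lt_of_le (Real.rpow_pos_of_pos hρpos a) hρar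
    obtain ⟨k, hk1, hk2⟩ := exists_dyadic hρpos hρ1.le
    obtain ⟨j, hj1, hj2⟩ := exists_dyadic hrpos hr1
    have hρa_gt : ρ < ρ ^ a := by
      have h := Real.rpow_lt_rpow_of_exponent_gt hρpos hρ1 ha1
      rwa [Real.rpow_one] at h
    have hjk : j ≤ k := by
      have h1 : (1/2:ℝ)^(k+1) < (1/2:ℝ)^j := by
        calc (1/2:ℝ)^(k+1) < ρ := hk1
        _ < ρ ^ a := hρa_gt
        _ ≤ r := hρar
        _ ≤ (1/2:ℝ)^j := hj2
      have h2 := (pow_lt_pow_iff_right_of_lt_one₀ (by norm_num) (by norm_num)).1 h1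
      omega
    have hja : (j:ℝ) ≤ ((k:ℝ)+1)*a := by
      have h2 : ((1/2:ℝ))^(((k:ℝ)+1)*a) < (1/2:ℝ)^((j:ℝ)) := by
        rw [Real.rpow_mul (by norm_num : (0:ℝ) ≤ 1/2),
          show ((k:ℝ)+1) = ((k+1:ℕ):ℝ) by push_cast; ring,
          Real.rpow_natCast, Real.rpow_natCast]
        calc ((1/2:ℝ)^(k+1))^a < ρ^a := Real.rpow_lt_rpow (by positivity) hk1 ha0
        _ ≤ r := hρar
        _ ≤ (1/2:ℝ)^j := hj2
      have h3 := (Real.rpow_lt_rpow_left_iff_of_base_lt_one (by norm_num) (by norm_num)).1 h2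
      linarith
    have hxA : x ∈ Aset μ t ε k j := by
      have hcoef : Tco t ε k j ≤ ENNReal.ofReal ((4 * r / ρ) ^ (t * (1 + ε))) := by
        rw [show Tco t ε k j
            = ENNReal.ofReal ((2:ℝ) ^ (((k:ℝ)+1-(j:ℝ)) * (t*(1+ε)))) from rfl]
        apply ENNReal.ofReal_le_ofReal
        have hbase : (2:ℝ) ^ ((k:ℝ)+1-(j:ℝ)) ≤ 4 * r / ρ := by
          rw [← half_pow_div k j, div_le_div_iff₀ (by positivity) hρpos]
          have hv2 : (2:ℝ) * (1/2:ℝ)^(k+1) = (1/2:ℝ)^k := by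
            rw [pow_succ]; ring
          have hρ2v : ρ ≤ 2 * (1/2:ℝ)^(k+1) := by rw [hv2]; exact hk2
          have hru : (1/2:ℝ)^j ≤ 2 * r := by
            have h' : (1/2:ℝ)^(j+1) < r := hj1
            have he : (1/2:ℝ)^(j+1) = (1/2:ℝ)^j / 2 := by rw [pow_succ]; ring
            rw [he] at h'
            linarith
          have hu0 : (0:ℝ) < (1/2:ℝ)^j := by positivity
          have hv0 : (0:ℝ) < (1/2:ℝ)^(k+1) := by positivity
          nlinarith [mul_le_mul_of_nonneg_left hρ2v hu0.le,
            mul_le_mul_of_nonneg_right hru (by positivity : (0:ℝ) ≤ 2 * (1/2:ℝ)^(k+1))]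
        calc (2:ℝ) ^ (((k:ℝ)+1-(j:ℝ)) * (t*(1+ε)))
            = ((2:ℝ) ^ ((k:ℝ)+1-(j:ℝ))) ^ (t*(1+ε)) :=
              Real.rpow_mul (by norm_num : (0:ℝ) ≤ 2) _ _
        _ ≤ (4 * r / ρ) ^ (t*(1+ε)) :=
              Real.rpow_le_rpow (by positivity) hbase (by positivity)
      show Tco t ε k j * μ (Metric.closedBall x ((1/2:ℝ)^(k+1)))
          < μ (Metric.closedBall x ((1/2:ℝ)^j))
      calc Tco t ε k j * μ (Metric.closedBall x ((1/2:ℝ)^(k+1)))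
          ≤ ENNReal.ofReal ((4 * r / ρ) ^ (t * (1 + ε))) * μ (Metric.closedBall x ρ) :=
            mul_le_mul' hcoef (measure_mono (Metric.closedBall_subset_closedBall hk1.le))
      _ < μ (Metric.closedBall x r) := hμlt
      _ ≤ μ (Metric.closedBall x ((1/2:ℝ)^j)) :=
            measure_mono (Metric.closedBall_subset_closedBall hj2)
    have hcond : cond k j := ⟨hja, hjk, lt_trans hk1 hρlt⟩
    have hKk : K ≤ k := Nat.find_le hcond.2.2
    refine Or.inr ?_
    simp only [Set.mem_iUnion]
    refine ⟨k - K, j, ?_⟩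
    show x ∈ S (K + (k - K)) j
    have hkk : K + (k - K) = k := by omega
    rw [hkk]
    show x ∈ (if cond k j then Aset μ t ε k j else ∅)
    rw [if_pos hcond]
    exact hxA
  -- per-term bounds
  have hSbound : ∀ m j : ℕ, μ (S (K + m) j) ≤
      (if cond (K + m) j then ENNReal.ofReal (c * Cup * 15^t) *
        (2:ℝ≥0∞) ^ (-((((K + m : ℕ):ℝ)+1-(j:ℝ)) * (t*ε))) else 0) := by
    intro m j
    by_cases h : cond (K + m) j
    · rw [if_pos h]
      have hSeq : S (K + m) j = Aset μ t ε (K + m) j := if_pos h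
      rw [hSeq]
      exact bound_Akj μ a ε t hε ht F ν c Cup hEF hc hcCup hreg hupball (K + m) j h.2.1
    · have hSeq : S (K + m) j = ∅ := if_neg h
      rw [hSeq, if_neg h, measure_empty]
  -- geometric series
  have hgeo1 : ∑' l : ℕ, q1 ^ l = (1 - q1)⁻¹ := ENNReal.tsum_geometric q1
  have hgeo2 : ∑' l : ℕ, q2 ^ l = (1 - q2)⁻¹ := ENNReal.tsum_geometric q2
  -- inner sums
  have hinner : ∀ m : ℕ, (∑' j : ℕ, (if cond (K + m) j then ENNReal.ofReal (c * Cup * 15^t) *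
        (2:ℝ≥0∞) ^ (-((((K + m : ℕ):ℝ)+1-(j:ℝ)) * (t*ε))) else 0)) ≤
      ENNReal.ofReal (c * Cup * 15^t) * (1 - q1)⁻¹ *
        (2:ℝ≥0∞) ^ (-((((K + m : ℕ):ℝ)+1) * (t*ε*(1-a)))) := by
    intro m
    set k : ℕ := K + m with hkdef
    set J : ℕ := Nat.floor (((k:ℝ)+1)*a) with hJdef
    have hJle : (J:ℝ) ≤ ((k:ℝ)+1)*a := Nat.floor_le (by positivity)
    have hterm : ∀ j : ℕ, (if cond k j then ENNReal.ofReal (c*Cup*15^t) *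
        (2:ℝ≥0∞) ^ (-(((k:ℝ)+1-(j:ℝ)) * (t*ε))) else 0) ≤
        (ENNReal.ofReal (c*Cup*15^t) * (2:ℝ≥0∞) ^ (-(((k:ℝ)+1) * (t*ε*(1-a))))) *
          (if j ≤ J then q1 ^ (J - j) else 0) := by
      intro j
      by_cases h : cond k j
      · rw [if_pos h]
        have hjJ : j ≤ J := Nat.le_floor h.1
        rw [if_pos hjJ]
        have hsub : ((J - j : ℕ):ℝ) = (J:ℝ) - (j:ℝ) := by
          push_cast [Nat.cast_sub hjJ]
          ring
        have hexp : (-(((k:ℝ)+1-(j:ℝ)) * (t*ε))) ≤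
            (-(((k:ℝ)+1) * (t*ε*(1-a)))) + (-(t*ε)) * ((J - j:ℕ):ℝ) := by
          rw [hsub]
          nlinarith [mul_nonneg (sub_nonneg.2 hJle) htε.le]
        calc ENNReal.ofReal (c*Cup*15^t) * (2:ℝ≥0∞) ^ (-(((k:ℝ)+1-(j:ℝ)) * (t*ε)))
            ≤ ENNReal.ofReal (c*Cup*15^t) *
              (2:ℝ≥0∞) ^ ((-(((k:ℝ)+1) * (t*ε*(1-a)))) + (-(t*ε)) * ((J - j:ℕ):ℝ)) := by
              apply mul_le_mul_right
              exact ENNReal.rpow_le_rpow_of_exponent_le (by norm_num) hexp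
        _ = (ENNReal.ofReal (c*Cup*15^t) * (2:ℝ≥0∞) ^ (-(((k:ℝ)+1) * (t*ε*(1-a))))) *
              q1 ^ (J - j) := by
            rw [ENNReal.rpow_add _ _ h20 h2top, ← mul_assoc]
            congr 1
            rw [hq1def, ENNReal.rpow_mul, ENNReal.rpow_natCast]
      · rw [if_neg h]
        exact zero_le
    calc (∑' j : ℕ, (if cond k j then ENNReal.ofReal (c*Cup*15^t) *
          (2:ℝ≥0∞) ^ (-(((k:ℝ)+1-(j:ℝ)) * (t*ε))) else 0))
        ≤ ∑' j : ℕ, (ENNReal.ofReal (c*Cup*15^t) *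
            (2:ℝ≥0∞) ^ (-(((k:ℝ)+1) * (t*ε*(1-a))))) * (if j ≤ J then q1 ^ (J - j) else 0) :=
          ENNReal.tsum_le_tsum hterm
    _ = (ENNReal.ofReal (c*Cup*15^t) * (2:ℝ≥0∞) ^ (-(((k:ℝ)+1) * (t*ε*(1-a))))) *
          ∑' j : ℕ, (if j ≤ J then q1 ^ (J - j) else 0) := ENNReal.tsum_mul_left
    _ ≤ (ENNReal.ofReal (c*Cup*15^t) * (2:ℝ≥0∞) ^ (-(((k:ℝ)+1) * (t*ε*(1-a))))) *
          (1 - q1)⁻¹ := by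
        apply mul_le_mul_right
        have hsum : (∑' j : ℕ, (if j ≤ J then q1 ^ (J - j) else 0))
            = ∑ j ∈ Finset.range (J+1), (if j ≤ J then q1 ^ (J - j) else 0) := by
          apply tsum_eq_sum
          intro b hb
          rw [if_neg]
          intro hbJ
          exact hb (Finset.mem_range.2 (by omega))
        rw [hsum]
        have hsum2 : ∑ j ∈ Finset.range (J+1), (if j ≤ J then q1 ^ (J - j) else 0)
            = ∑ j ∈ Finset.range (J+1), q1 ^ (J - j) := by
          apply Finset.sum_congr rfl
          intro j hj
          have hj' := Finset.mem_range.1 hj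
          rw [if_pos (by omega)]
        rw [hsum2]
        have hsum3 : ∑ j ∈ Finset.range (J+1), q1 ^ (J - j)
            = ∑ j ∈ Finset.range (J+1), q1 ^ j := by
          have h := Finset.sum_range_reflect (fun l => q1 ^ l) (J+1)
          simpa using h
        rw [hsum3]
        calc ∑ j ∈ Finset.range (J+1), q1 ^ j ≤ ∑' j : ℕ, q1 ^ j :=
              ENNReal.sum_le_tsum _
        _ = (1 - q1)⁻¹ := hgeo1
    _ = ENNReal.ofReal (c * Cup * 15^t) * (1 - q1)⁻¹ *
          (2:ℝ≥0∞) ^ (-(((k:ℝ)+1) * (t*ε*(1-a)))) := by ring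
  -- split the outer exponential
  have hsplit : ∀ m : ℕ, (2:ℝ≥0∞) ^ (-((((K + m : ℕ):ℝ)+1) * (t*ε*(1-a)))) =
      (2:ℝ≥0∞) ^ (-(((K:ℝ)+1) * (t*ε*(1-a)))) * q2 ^ m := by
    intro m
    rw [hq2def]
    rw [← ENNReal.rpow_natCast ((2:ℝ≥0∞) ^ (-(t*ε*(1-a)))) m, ← ENNReal.rpow_mul,
      ← ENNReal.rpow_add _ _ h20 h2top]
    congr 1
    push_cast
    ring
  -- assemble
  calc μ {x | ∃ ρ r : ℝ, 0 < ρ ∧ ρ < ρ₀ ∧ ρ ^ a ≤ r ∧ r ≤ 1 ∧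
      ENNReal.ofReal ((4 * r / ρ) ^ (t * (1 + ε))) * μ (Metric.closedBall x ρ)
        < μ (Metric.closedBall x r)}
      ≤ μ ((msupp μ)ᶜ ∪ ⋃ (m : ℕ), ⋃ (j : ℕ), S (K + m) j) := measure_mono hincl
  _ ≤ μ (msupp μ)ᶜ + μ (⋃ (m : ℕ), ⋃ (j : ℕ), S (K + m) j) := measure_union_le _ _
  _ = μ (⋃ (m : ℕ), ⋃ (j : ℕ), S (K + m) j) := by rw [hEc, zero_add]
  _ ≤ ∑' m : ℕ, μ (⋃ (j : ℕ), S (K + m) j) := measure_iUnion_le _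
  _ ≤ ∑' m : ℕ, ∑' j : ℕ, μ (S (K + m) j) :=
      ENNReal.tsum_le_tsum (fun m => measure_iUnion_le _)
  _ ≤ ∑' m : ℕ, (∑' j : ℕ, (if cond (K + m) j then ENNReal.ofReal (c * Cup * 15^t) *
        (2:ℝ≥0∞) ^ (-((((K + m : ℕ):ℝ)+1-(j:ℝ)) * (t*ε))) else 0)) :=
      ENNReal.tsum_le_tsum (fun m => ENNReal.tsum_le_tsum (hSbound m))
  _ ≤ ∑' m : ℕ, ENNReal.ofReal (c * Cup * 15^t) * (1 - q1)⁻¹ *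
        (2:ℝ≥0∞) ^ (-((((K + m : ℕ):ℝ)+1) * (t*ε*(1-a)))) :=
      ENNReal.tsum_le_tsum hinner
  _ = ∑' m : ℕ, (ENNReal.ofReal (c * Cup * 15^t) * (1 - q1)⁻¹ *
        (2:ℝ≥0∞) ^ (-(((K:ℝ)+1) * (t*ε*(1-a))))) * q2 ^ m := by
      apply tsum_congr
      intro m
      rw [hsplit m]
      ring
  _ = (ENNReal.ofReal (c * Cup * 15^t) * (1 - q1)⁻¹ *
        (2:ℝ≥0∞) ^ (-(((K:ℝ)+1) * (t*ε*(1-a))))) * ∑' m : ℕ, q2 ^ m :=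
      ENNReal.tsum_mul_left
  _ = P * (2:ℝ≥0∞) ^ (-(((K:ℝ)+1) * (t*ε*(1-a)))) := by
      rw [hgeo2, hPdef]
      ring
  _ ≤ P * ENNReal.ofReal (ρ₀ ^ (t*ε*(1-a))) := by
      apply mul_le_mul_right
      have h1 : (2:ℝ≥0∞) ^ (-(((K:ℝ)+1) * (t*ε*(1-a)))) =
          ENNReal.ofReal ((2:ℝ) ^ (-(((K:ℝ)+1) * (t*ε*(1-a))))) := by
        rw [← ENNReal.ofReal_rpow_of_pos (by norm_num : (0:ℝ) < 2)]
        norm_num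
      rw [h1]
      apply ENNReal.ofReal_le_ofReal
      have h2 : (2:ℝ) ^ (-(((K:ℝ)+1) * (t*ε*(1-a)))) = ((1/2:ℝ)^(K+1)) ^ (t*ε*(1-a)) := by
        rw [show (-(((K:ℝ)+1) * (t*ε*(1-a)))) = (-((K:ℝ)+1)) * (t*ε*(1-a)) by ring,
          Real.rpow_mul (by norm_num : (0:ℝ) ≤ 2)]
        congr 1
        rw [Real.rpow_neg (by norm_num : (0:ℝ) ≤ 2),
          show ((K:ℝ)+1) = ((K+1:ℕ):ℝ) by push_cast; ring, Real.rpow_natCast, one_div,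
          inv_pow]
      rw [h2]
      exact Real.rpow_le_rpow (by positivity) hKspec.le hθ.le
  _ ≤ ENNReal.ofReal (P.toReal + 1) * ENNReal.ofReal (ρ₀ ^ (t*ε*(1-a))) := by
      apply mul_le_mul_left
      calc P = ENNReal.ofReal P.toReal := (ENNReal.ofReal_toReal hPtop).symm
      _ ≤ ENNReal.ofReal (P.toReal + 1) := ENNReal.ofReal_le_ofReal (by linarith)
  _ = ENNReal.ofReal ((P.toReal + 1) * ρ₀ ^ (t * ε * (1 - a))) :=
      (ENNReal.ofReal_mul (by positivity)).symm
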